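/- For every n ≥ 2, every residue class modulo F_{2n} can be written as a sum of n-1 elements (with repetition allowed) of the set A = {0} ∪ {F_{2k-1} : 1 ≤ k ≤ n} ⊆ ℤ/F_{2n}ℤ. -/

import Mathlib

private lemma fib_rep : ∀ k m : ℕ, m < Nat.fib (2 * k) →
    ∃ l : List ℕ, l.length + 1 ≤ k ∧
      (∀ a ∈ l, ∃ j, 1 ≤ j ∧ j ≤ k ∧ a = Nat.fib (2 * j - 1)) ∧ l.sum = m := by
  intro k
  induction k with
  | zero => intro m hm; simp at hm
  | succ k ih =>
    intro m hm
    rcases Nat.lt_or_ge m (Nat.fib (2 * k)) with h | h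
    · obtain ⟨l, h1, h2, h3⟩ := ih m h
      exact ⟨l, by omega, fun a ha => by
        obtain ⟨j, j1, j2, j3⟩ := h2 a ha; exact ⟨j, j1, by omega, j3⟩, h3⟩
    · have hfib : Nat.fib (2 * (k + 1)) = Nat.fib (2 * k) + Nat.fib (2 * k + 1) := by
        have e : 2 * (k + 1) = 2 * k + 2 := by ring
        rw [e, Nat.fib_add_two]
      rcases Nat.lt_or_ge m (Nat.fib (2 * k + 1)) with h2 | h2
      · -- fib (2k) ≤ m < fib (2k+1); need k ≥ 1
        rcases k with _ | k'
        · have h1 : Nat.fib (2 * 0 + 1) = 1 := rfl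
          have hm0 : m = 0 := by omega
          exact ⟨[], Nat.le_refl _, fun a ha => absurd ha List.not_mem_nil, by simp [hm0]⟩
        · have hfib2 : Nat.fib (2 * (k' + 1) + 1) =
              Nat.fib (2 * k' + 1) + Nat.fib (2 * (k' + 1)) := by
            have e : 2 * (k' + 1) + 1 = (2 * k' + 1) + 2 := by ring
            have e2 : 2 * k' + 1 + 1 = 2 * (k' + 1) := by ring
            rw [e, Nat.fib_add_two, e2]
          have hmono : Nat.fib (2 * k' + 1) ≤ Nat.fib (2 * (k' + 1)) :=
            Nat.fib_mono (by omega)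
          have hm'' : m - Nat.fib (2 * k' + 1) < Nat.fib (2 * (k' + 1)) := by omega
          obtain ⟨l, h1, hmem, h3⟩ := ih (m - Nat.fib (2 * k' + 1)) hm''
          refine ⟨Nat.fib (2 * k' + 1) :: l, by simpa using h1, ?_, ?_⟩
          · intro a ha
            rcases List.mem_cons.mp ha with rfl | ha
            · refine ⟨k' + 1, by omega, by omega, ?_⟩
              have e : 2 * (k' + 1) - 1 = 2 * k' + 1 := by omega
              rw [e]
            · obtain ⟨j, j1, j2, j3⟩ := hmem a ha; exact ⟨j, j1, by omega, j3⟩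
          · simp only [List.sum_cons, h3]; omega
      · -- fib (2k+1) ≤ m < fib (2k+2)
        have hm' : m - Nat.fib (2 * k + 1) < Nat.fib (2 * k) := by omega
        obtain ⟨l, h1, hmem, h3⟩ := ih (m - Nat.fib (2 * k + 1)) hm'
        refine ⟨Nat.fib (2 * k + 1) :: l, by simpa using h1, ?_, ?_⟩
        · intro a ha
          rcases List.mem_cons.mp ha with rfl | ha
          · refine ⟨k + 1, by omega, le_refl _, ?_⟩
            have e : 2 * (k + 1) - 1 = 2 * k + 1 := by omega
            rw [e]
          · obtain ⟨j, j1, j2, j3⟩ := hmem a ha; exact ⟨j, j1, by omega, j3⟩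
        · simp only [List.sum_cons, h3]; omega

private lemma sum_getD : ∀ (l : List ℕ) (N : ℕ), l.length ≤ N →
    ∑ i ∈ Finset.range N, l.getD i 0 = l.sum := by
  intro l
  induction l with
  | nil => intro N _; simp [List.getD]
  | cons a t ih =>
    intro N hN
    simp only [List.length_cons] at hN
    obtain ⟨N', rfl⟩ : ∃ N', N = N' + 1 := ⟨N - 1, by omega⟩
    rw [Finset.sum_range_succ']
    simp only [List.getD_cons_succ, List.getD_cons_zero, List.sum_cons]
    rw [ih N' (by omega)]; ring

theorem fan_sumset_covers (n : ℕ) (hn : 2 ≤ n) (x : ZMod (Nat.fib (2 * n))) :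
    ∃ f : Fin (n - 1) → ZMod (Nat.fib (2 * n)),
      (∀ i, f i = 0 ∨ ∃ k, 1 ≤ k ∧ k ≤ n ∧ f i = (Nat.fib (2 * k - 1) : ZMod (Nat.fib (2 * n)))) ∧
      ∑ i, f i = x := by
  have hpos : 0 < Nat.fib (2 * n) := Nat.fib_pos.2 (by omega)
  haveI : NeZero (Nat.fib (2 * n)) := ⟨hpos.ne'⟩
  have hm : x.val < Nat.fib (2 * n) := ZMod.val_lt x
  obtain ⟨l, hlen, hmem, hsum⟩ := fib_rep n x.val hm
  refine ⟨fun i => ((l.getD i 0 : ℕ) : ZMod (Nat.fib (2 * n))), ?_, ?_⟩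
  · intro i
    beta_reduce
    by_cases h : (i : ℕ) < l.length
    · right
      have hget : l.getD i 0 = l[(i : ℕ)]'h := List.getD_eq_getElem l 0 h
      have hmem' : l.getD i 0 ∈ l := by rw [hget]; exact List.getElem_mem h
      obtain ⟨j, j1, j2, j3⟩ := hmem _ hmem'
      exact ⟨j, j1, j2, by rw [j3]⟩
    · left
      rw [List.getD_eq_default l 0 (by omega)]
      simp
  · show ∑ i : Fin (n - 1), ((l.getD (i : ℕ) 0 : ℕ) : ZMod (Nat.fib (2 * n))) = x
    have key : ∑ i ∈ Finset.range (n - 1), (l.getD i 0) = l.sum :=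
      sum_getD l (n - 1) (by omega)
    calc ∑ i : Fin (n - 1), ((l.getD (i : ℕ) 0 : ℕ) : ZMod (Nat.fib (2 * n)))
        = ((∑ i ∈ Finset.range (n - 1), l.getD i 0 : ℕ) : ZMod (Nat.fib (2 * n))) := by
          rw [Fin.sum_univ_eq_sum_range (fun m => ((l.getD m 0 : ℕ) : ZMod (Nat.fib (2 * n)))) (n - 1)]
          push_cast
          rfl
      _ = ((x.val : ℕ) : ZMod (Nat.fib (2 * n))) := by rw [key, hsum]
      _ = x := ZMod.natCast_rightInverse x
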